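/- Let μ_k be finite Radon measures on a compact metric space D converging weakly to μ, and y ↦ A_y a continuous family of convex bodies in ℝ^n. Then the Minkowski integrals ∫_D A_y dμ_k(y) converge to ∫_D A_y dμ(y) in the Hausdorff metric. -/

import Mathlib

open MeasureTheory Metric Set Filter
open scoped RealInnerProductSpace NNReal ENNReal Pointwise Topology

/-- The support function of a set `A ⊆ ℝⁿ`: `h_A(ξ) = sup_{ζ ∈ A} ⟨ζ, ξ⟩`. -/
noncomputable def suppFn {n : ℕ} (A : Set (EuclideanSpace ℝ (Fin n)))
    (ξ : EuclideanSpace ℝ (Fin n)) : ℝ :=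
  sSup ((fun ζ => ⟪ζ, ξ⟫) '' A)

variable {n : ℕ}

lemma suppFn_bddAbove (K : ConvexBody (EuclideanSpace ℝ (Fin n))) (ξ : EuclideanSpace ℝ (Fin n)) :
    BddAbove ((fun ζ => ⟪ζ, ξ⟫) '' (K : Set (EuclideanSpace ℝ (Fin n)))) :=
  (K.isCompact.image (continuous_id.inner continuous_const)).bddAbove

lemma inner_le_suppFn {K : ConvexBody (EuclideanSpace ℝ (Fin n))} {x : EuclideanSpace ℝ (Fin n)}
    (hx : x ∈ K) (ξ : EuclideanSpace ℝ (Fin n)) :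
    ⟪x, ξ⟫ ≤ suppFn (K : Set (EuclideanSpace ℝ (Fin n))) ξ :=
  le_csSup (suppFn_bddAbove K ξ) ⟨x, hx, rfl⟩

lemma suppFn_le {K : ConvexBody (EuclideanSpace ℝ (Fin n))} {ξ : EuclideanSpace ℝ (Fin n)} {c : ℝ}
    (h : ∀ x ∈ K, ⟪x, ξ⟫ ≤ c) : suppFn (K : Set (EuclideanSpace ℝ (Fin n))) ξ ≤ c :=
  csSup_le (K.nonempty.image _) (by rintro _ ⟨x, hx, rfl⟩; exact h x hx)

lemma suppFn_sub_le_of_subset {K : ConvexBody (EuclideanSpace ℝ (Fin n))} {R : ℝ}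
    (hK : (K : Set (EuclideanSpace ℝ (Fin n))) ⊆ closedBall 0 R)
    (ξ η : EuclideanSpace ℝ (Fin n)) :
    suppFn (K : Set (EuclideanSpace ℝ (Fin n))) ξ
      ≤ suppFn (K : Set (EuclideanSpace ℝ (Fin n))) η + R * ‖ξ - η‖ := by
  apply suppFn_le
  intro x hx
  have h1 : ⟪x, ξ⟫ = ⟪x, η⟫ + ⟪x, ξ - η⟫ := by rw [inner_sub_right]; ring
  have h2 : ⟪x, ξ - η⟫ ≤ ‖x‖ * ‖ξ - η‖ := real_inner_le_norm _ _
  have h3 : ‖x‖ ≤ R := by simpa [mem_closedBall_zero_iff] using hK hx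
  have h4 : ⟪x, η⟫ ≤ suppFn (K : Set (EuclideanSpace ℝ (Fin n))) η := inner_le_suppFn hx η
  have h5 : ‖x‖ * ‖ξ - η‖ ≤ R * ‖ξ - η‖ :=
    mul_le_mul_of_nonneg_right h3 (norm_nonneg _)
  linarith

lemma abs_suppFn_sub_le_of_subset {K : ConvexBody (EuclideanSpace ℝ (Fin n))} {R : ℝ}
    (hK : (K : Set (EuclideanSpace ℝ (Fin n))) ⊆ closedBall 0 R)
    (ξ η : EuclideanSpace ℝ (Fin n)) :
    |suppFn (K : Set (EuclideanSpace ℝ (Fin n))) ξ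
      - suppFn (K : Set (EuclideanSpace ℝ (Fin n))) η| ≤ R * ‖ξ - η‖ := by
  rw [abs_sub_le_iff]
  constructor
  · linarith [suppFn_sub_le_of_subset hK ξ η]
  · have := suppFn_sub_le_of_subset hK η ξ
    rw [norm_sub_rev] at this
    linarith

lemma abs_suppFn_le_of_subset {K : ConvexBody (EuclideanSpace ℝ (Fin n))} {R : ℝ}
    (hK : (K : Set (EuclideanSpace ℝ (Fin n))) ⊆ closedBall 0 R)
    (ξ : EuclideanSpace ℝ (Fin n)) :
    |suppFn (K : Set (EuclideanSpace ℝ (Fin n))) ξ| ≤ R * ‖ξ‖ := by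
  rw [abs_le]
  constructor
  · obtain ⟨x, hx⟩ := K.nonempty
    have h1 : |⟪x, ξ⟫| ≤ ‖x‖ * ‖ξ‖ := abs_real_inner_le_norm _ _
    have h3 : ‖x‖ ≤ R := by simpa [mem_closedBall_zero_iff] using hK hx
    have h4 : ⟪x, ξ⟫ ≤ suppFn (K : Set (EuclideanSpace ℝ (Fin n))) ξ := inner_le_suppFn hx ξ
    have h5 : ‖x‖ * ‖ξ‖ ≤ R * ‖ξ‖ := mul_le_mul_of_nonneg_right h3 (norm_nonneg _)
    have := neg_le_of_abs_le h1
    linarith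
  · exact suppFn_le fun x hx => (real_inner_le_norm _ _).trans
      (mul_le_mul_of_nonneg_right (by simpa [mem_closedBall_zero_iff] using hK hx) (norm_nonneg _))

lemma subset_closedBall_of_suppFn_le {K : ConvexBody (EuclideanSpace ℝ (Fin n))} {M : ℝ}
    (hM : 0 ≤ M) (h : ∀ ξ, suppFn (K : Set (EuclideanSpace ℝ (Fin n))) ξ ≤ M * ‖ξ‖) :
    (K : Set (EuclideanSpace ℝ (Fin n))) ⊆ closedBall 0 M := by
  intro x hx
  rw [mem_closedBall_zero_iff]
  have h1 : ‖x‖ * ‖x‖ ≤ M * ‖x‖ := by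
    have h2 := (inner_le_suppFn hx x).trans (h x)
    rwa [real_inner_self_eq_norm_mul_norm] at h2
  rcases eq_or_lt_of_le (norm_nonneg x) with h0 | h0
  · rw [← h0]; exact hM
  · exact le_of_mul_le_mul_right h1 h0

lemma suppFn_le_suppFn_add_dist (K L : ConvexBody (EuclideanSpace ℝ (Fin n)))
    (ξ : EuclideanSpace ℝ (Fin n)) :
    suppFn (K : Set (EuclideanSpace ℝ (Fin n))) ξ
      ≤ suppFn (L : Set (EuclideanSpace ℝ (Fin n))) ξ + dist K L * ‖ξ‖ := by
  apply suppFn_le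
  intro x hx
  obtain ⟨z, hz, hdz⟩ := L.isCompact.exists_infDist_eq_dist L.nonempty x
  have hd : dist x z ≤ dist K L := by
    rw [← hdz, ← ConvexBody.hausdorffDist_coe]
    exact infDist_le_hausdorffDist_of_mem hx ConvexBody.hausdorffEdist_ne_top
  have h1 : ⟪x, ξ⟫ = ⟪z, ξ⟫ + ⟪x - z, ξ⟫ := by rw [inner_sub_left]; ring
  have h2 : ⟪x - z, ξ⟫ ≤ ‖x - z‖ * ‖ξ‖ := real_inner_le_norm _ _
  have h3 : ‖x - z‖ * ‖ξ‖ ≤ dist K L * ‖ξ‖ := by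
    apply mul_le_mul_of_nonneg_right _ (norm_nonneg _)
    rwa [← dist_eq_norm]
  have h4 : ⟪z, ξ⟫ ≤ suppFn (L : Set (EuclideanSpace ℝ (Fin n))) ξ := inner_le_suppFn hz ξ
  linarith

lemma continuous_suppFn_comp {D : Type*} [TopologicalSpace D]
    (A : D → ConvexBody (EuclideanSpace ℝ (Fin n))) (hA : Continuous A)
    (ξ : EuclideanSpace ℝ (Fin n)) :
    Continuous fun y => suppFn ((A y : Set (EuclideanSpace ℝ (Fin n)))) ξ := by
  have hlip : LipschitzWith ‖ξ‖₊ (fun K : ConvexBody (EuclideanSpace ℝ (Fin n)) =>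
      suppFn (K : Set (EuclideanSpace ℝ (Fin n))) ξ) := by
    apply LipschitzWith.of_dist_le_mul
    intro K L
    rw [Real.dist_eq, coe_nnnorm]
    rw [abs_sub_le_iff]
    constructor
    · have := suppFn_le_suppFn_add_dist K L ξ
      nlinarith [dist_nonneg (x := K) (y := L), norm_nonneg ξ]
    · have := suppFn_le_suppFn_add_dist L K ξ
      rw [dist_comm] at this
      nlinarith [dist_nonneg (x := K) (y := L), norm_nonneg ξ]
  exact hlip.continuous.comp hA

lemma exists_close_of_suppFn_le (K L : ConvexBody (EuclideanSpace ℝ (Fin n))) {ε : ℝ}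
    (hε : 0 ≤ ε)
    (h : ∀ ξ : EuclideanSpace ℝ (Fin n), ‖ξ‖ ≤ 1 →
      suppFn (K : Set (EuclideanSpace ℝ (Fin n))) ξ
        ≤ suppFn (L : Set (EuclideanSpace ℝ (Fin n))) ξ + ε)
    {x : EuclideanSpace ℝ (Fin n)} (hx : x ∈ K) :
    ∃ z ∈ (L : Set (EuclideanSpace ℝ (Fin n))), dist x z ≤ ε := by
  obtain ⟨z, hz, hz_eq⟩ :=
    exists_norm_eq_iInf_of_complete_convex L.nonempty L.isClosed.isComplete L.convex x
  refine ⟨z, hz, ?_⟩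
  have hproj := (norm_eq_iInf_iff_real_inner_le_zero L.convex hz).1 hz_eq
  rcases eq_or_ne x z with rfl | hxz
  · simpa using hε
  · set d : ℝ := ‖x - z‖ with hd
    have hd0 : 0 < d := by
      rw [hd, norm_pos_iff]
      exact sub_ne_zero_of_ne hxz
    set ξ : EuclideanSpace ℝ (Fin n) := d⁻¹ • (x - z) with hξ
    have hξnorm : ‖ξ‖ = 1 := by
      rw [hξ, norm_smul, norm_inv, Real.norm_eq_abs, abs_of_pos hd0, ← hd,
        inv_mul_cancel₀ hd0.ne']
    have hxξ : ⟪x - z, ξ⟫ = d := by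
      rw [hξ, real_inner_smul_right, real_inner_self_eq_norm_mul_norm, ← hd]
      field_simp
    have hL : suppFn (L : Set (EuclideanSpace ℝ (Fin n))) ξ ≤ ⟪z, ξ⟫ := by
      apply suppFn_le
      intro w hw
      have h1 : ⟪w - z, ξ⟫ ≤ 0 := by
        rw [hξ, real_inner_smul_right]
        have h2 : ⟪x - z, w - z⟫ ≤ 0 := hproj w hw
        rw [real_inner_comm] at h2
        exact mul_nonpos_of_nonneg_of_nonpos (by positivity) h2
      have h3 : ⟪w, ξ⟫ = ⟪z, ξ⟫ + ⟪w - z, ξ⟫ := by rw [inner_sub_left]; ring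
      linarith
    have hxK : ⟪x, ξ⟫ ≤ suppFn (K : Set (EuclideanSpace ℝ (Fin n))) ξ := inner_le_suppFn hx ξ
    have hsub : ⟪x, ξ⟫ - ⟪z, ξ⟫ = d := by rw [← hxξ, inner_sub_left]
    have := h ξ (le_of_eq hξnorm)
    rw [dist_eq_norm, ← hd]
    linarith

lemma dist_le_of_suppFn_close (K L : ConvexBody (EuclideanSpace ℝ (Fin n))) {ε : ℝ}
    (hε : 0 ≤ ε)
    (h : ∀ ξ : EuclideanSpace ℝ (Fin n), ‖ξ‖ ≤ 1 →
      |suppFn (K : Set (EuclideanSpace ℝ (Fin n))) ξ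
        - suppFn (L : Set (EuclideanSpace ℝ (Fin n))) ξ| ≤ ε) :
    dist K L ≤ ε := by
  rw [← ConvexBody.hausdorffDist_coe]
  apply hausdorffDist_le_of_mem_dist hε
  · intro x hx
    exact exists_close_of_suppFn_le K L hε
      (fun ξ hξ => by linarith [(abs_le.1 (h ξ hξ)).2]) hx
  · intro x hx
    exact exists_close_of_suppFn_le L K hε
      (fun ξ hξ => by linarith [(abs_le.1 (h ξ hξ)).1]) hx

/-- If finite Radon measures `μ k` converge weakly to `μ`, then the Minkowski integrals
`∫ A_y dμ_k(y)` converge to `∫ A_y dμ(y)` in the Hausdorff metric. -/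
theorem minkowski_integral_weak_convergence {n : ℕ} {D : Type*} [MetricSpace D]
    [CompactSpace D] [MeasurableSpace D] [BorelSpace D]
    (μseq : ℕ → Measure D) (μ : Measure D)
    [∀ k, IsFiniteMeasure (μseq k)] [IsFiniteMeasure μ]
    (hweak : ∀ f : C(D, ℝ), Tendsto (fun k => ∫ y, f y ∂(μseq k)) atTop (𝓝 (∫ y, f y ∂μ)))
    (A : D → ConvexBody (EuclideanSpace ℝ (Fin n))) (hA : Continuous A)
    (Kseq : ℕ → ConvexBody (EuclideanSpace ℝ (Fin n)))
    (K : ConvexBody (EuclideanSpace ℝ (Fin n)))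
    (hKseq : ∀ k ξ, suppFn (Kseq k : Set (EuclideanSpace ℝ (Fin n))) ξ
      = ∫ y, suppFn (A y : Set (EuclideanSpace ℝ (Fin n))) ξ ∂(μseq k))
    (hK : ∀ ξ, suppFn (K : Set (EuclideanSpace ℝ (Fin n))) ξ
      = ∫ y, suppFn (A y : Set (EuclideanSpace ℝ (Fin n))) ξ ∂μ) :
    Tendsto Kseq atTop (𝓝 K) := by
  set V := EuclideanSpace ℝ (Fin n)
  -- uniform bound on the bodies `A y`
  obtain ⟨r, hr⟩ := (isCompact_range hA).isBounded.subset_closedBall (0 : ConvexBody V)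
  set R : ℝ := max r 0 with hRdef
  have hR0 : 0 ≤ R := le_max_right _ _
  have hRA : ∀ y, (A y : Set V) ⊆ closedBall 0 R := by
    intro y x hx
    rw [mem_closedBall_zero_iff]
    have h1 : dist (A y) 0 ≤ r := by
      have := hr (mem_range_self y); rwa [mem_closedBall] at this
    have h2 : infDist x ((0 : ConvexBody V) : Set V)
        ≤ hausdorffDist ((A y : Set V)) ((0 : ConvexBody V) : Set V) :=
      infDist_le_hausdorffDist_of_mem hx ConvexBody.hausdorffEdist_ne_top
    rw [ConvexBody.hausdorffDist_coe] at h2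
    have h3 : ((0 : ConvexBody V) : Set V) = {0} := rfl
    rw [h3, infDist_singleton, dist_zero_right] at h2
    exact le_trans (h2.trans h1) (le_max_left _ _)
  -- the continuous functions y ↦ h_{A y}(ξ)
  set g : V → C(D, ℝ) := fun ξ =>
    ⟨fun y => suppFn ((A y : Set V)) ξ, continuous_suppFn_comp A hA ξ⟩ with hg
  have hint : ∀ ξ (ν : Measure D) [IsFiniteMeasure ν],
      Integrable (fun y => suppFn ((A y : Set V)) ξ) ν := by
    intro ξ ν _
    exact (BoundedContinuousFunction.mkOfCompact (g ξ)).integrable ν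
  -- uniform bound on total masses
  have hmass : Tendsto (fun k => (μseq k univ).toReal) atTop (𝓝 ((μ univ).toReal)) := by
    have := hweak 1
    simp [integral_const] at this
    exact this
  obtain ⟨B₀, hB₀⟩ := hmass.bddAbove_range
  set B : ℝ := max B₀ ((μ univ).toReal) with hBdef
  have hBseq : ∀ k, (μseq k univ).toReal ≤ B :=
    fun k => le_trans (hB₀ (mem_range_self k)) (le_max_left _ _)
  have hBμ : (μ univ).toReal ≤ B := le_max_right _ _
  have hB0 : 0 ≤ B := le_trans ENNReal.toReal_nonneg hBμ
  -- all the bodies are contained in `closedBall 0 M`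
  set M : ℝ := R * B with hMdef
  have hM0 : 0 ≤ M := mul_nonneg hR0 hB0
  have hbound : ∀ ξ (ν : Measure D) [IsFiniteMeasure ν], (ν univ).toReal ≤ B →
      (∫ y, suppFn ((A y : Set V)) ξ ∂ν) ≤ M * ‖ξ‖ := by
    intro ξ ν _ hν
    calc (∫ y, suppFn ((A y : Set V)) ξ ∂ν) ≤ ∫ _, R * ‖ξ‖ ∂ν := by
          apply integral_mono (hint ξ ν) (integrable_const _)
          intro y
          exact (le_abs_self _).trans (abs_suppFn_le_of_subset (hRA y) ξ)
      _ = (ν univ).toReal * (R * ‖ξ‖) := by rw [integral_const, smul_eq_mul]; rfl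
      _ ≤ B * (R * ‖ξ‖) := mul_le_mul_of_nonneg_right hν (by positivity)
      _ = M * ‖ξ‖ := by rw [hMdef]; ring
  have hKseqM : ∀ k, ((Kseq k : Set V)) ⊆ closedBall 0 M := fun k =>
    subset_closedBall_of_suppFn_le hM0 fun ξ => (hKseq k ξ).trans_le (hbound ξ (μseq k) (hBseq k))
  have hKM : ((K : Set V)) ⊆ closedBall 0 M :=
    subset_closedBall_of_suppFn_le hM0 fun ξ => (hK ξ).trans_le (hbound ξ μ hBμ)
  -- pointwise convergence of support functions
  have hpt : ∀ ξ, Tendsto (fun k => suppFn ((Kseq k : Set V)) ξ) atTop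
      (𝓝 (suppFn ((K : Set V)) ξ)) := by
    intro ξ
    simp_rw [hKseq, hK]
    exact hweak (g ξ)
  -- ε-net argument
  rw [Metric.tendsto_atTop]
  intro ε hε
  set δ : ℝ := ε / (8 * M + 8) with hδdef
  have hδ : 0 < δ := by positivity
  obtain ⟨t, ht⟩ := (isCompact_closedBall (0 : V) 1).elim_finite_subcover
    (fun ξ : V => Metric.ball ξ δ) (fun _ => isOpen_ball)
    (fun x _ => mem_iUnion.2 ⟨x, mem_ball_self hδ⟩)
  have hev : ∀ᶠ k in atTop, ∀ i ∈ t, |suppFn ((Kseq k : Set V)) i - suppFn ((K : Set V)) i|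
      < ε / 4 := by
    rw [eventually_all_finset]
    intro i _
    have h1 := Metric.tendsto_nhds.mp (hpt i) (ε / 4) (by positivity)
    filter_upwards [h1] with k hk
    rwa [Real.dist_eq] at hk
  obtain ⟨N, hN⟩ := eventually_atTop.1 hev
  refine ⟨N, fun k hk => ?_⟩
  have key : dist (Kseq k) K ≤ ε / 2 := by
    apply dist_le_of_suppFn_close _ _ (by positivity)
    intro ξ hξ
    have hξball : ξ ∈ closedBall (0 : V) 1 := by rwa [mem_closedBall_zero_iff]
    obtain ⟨i, hit, hiξ⟩ := mem_iUnion₂.1 (ht hξball)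
    have hdist : ‖ξ - i‖ ≤ δ := by
      rw [← dist_eq_norm]
      exact le_of_lt hiξ
    have h1 : |suppFn ((Kseq k : Set V)) ξ - suppFn ((Kseq k : Set V)) i| ≤ M * δ :=
      (abs_suppFn_sub_le_of_subset (hKseqM k) ξ i).trans
        (mul_le_mul_of_nonneg_left hdist hM0)
    have h2 : |suppFn ((K : Set V)) ξ - suppFn ((K : Set V)) i| ≤ M * δ :=
      (abs_suppFn_sub_le_of_subset hKM ξ i).trans (mul_le_mul_of_nonneg_left hdist hM0)
    have h3 : |suppFn ((Kseq k : Set V)) i - suppFn ((K : Set V)) i| < ε / 4 :=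
      hN k hk i hit
    have h4 : 2 * (M * δ) ≤ ε / 4 := by
      have hM8 : (0:ℝ) < 8 * M + 8 := by positivity
      rw [hδdef, show 2 * (M * (ε / (8 * M + 8))) = 2 * M * ε / (8 * M + 8) by ring,
        div_le_div_iff₀ hM8 (by norm_num : (0:ℝ) < 4)]
      nlinarith [hε.le, hM0]
    have t1 := abs_sub_le (suppFn ((Kseq k : Set V)) ξ) (suppFn ((Kseq k : Set V)) i)
      (suppFn ((K : Set V)) ξ)
    have t2 := abs_sub_le (suppFn ((Kseq k : Set V)) i) (suppFn ((K : Set V)) i)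
      (suppFn ((K : Set V)) ξ)
    have t3 : |suppFn ((K : Set V)) i - suppFn ((K : Set V)) ξ| ≤ M * δ := by
      rw [abs_sub_comm]; exact h2
    linarith
  linarith [key]
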